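/- arXiv:1708.08102 — 6 statements merged into one kernel-verified Lean document; each statement's English description precedes it below -/
import Mathlib

section
/- Let p ≤ n be positive integers, let α ≥ 2 and c₀ > 0, and let w be a real random variable with E[w] = 0, E[w²] = 1, satisfying P(|w| ≥ t) ≥ c₀/t^α for all t ≥ 1. Let W = (w_{ij}), 1 ≤ i ≤ p, 1 ≤ j ≤ n, be a p × n random matrix whose entries are i.i.d. copies of w, and let X_i ∈ ℝⁿ denote the i-th row of W (so |X_i|² = Σ_{j=1}^n w_{ij}²). Then for every K ≥ 1, P( max_{1 ≤ i ≤ p} |X_i| ≥ √(Kn) ) ≥ min{ c₀ p / (4 n^{α/2 − 1} K^{α/2}), 1/2 }. -/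
open MeasureTheory ProbabilityTheory


lemma aux_exp (x : ℝ) (hx : 0 ≤ x) : min (x / 4) (1 / 2) ≤ 1 - Real.exp (-x) := by
  rcases le_or_gt x 2 with h2 | h2
  · refine le_trans (min_le_left _ _) ?_
    have h := Real.add_one_le_exp x
    have hpos : (0:ℝ) < 1 + x := by linarith
    have hinv : Real.exp (-x) ≤ 1 / (1 + x) := by
      rw [Real.exp_neg, inv_eq_one_div]
      exact one_div_le_one_div_of_le hpos (by linarith)
    have : 1 / (1 + x) ≤ 1 - x / 4 := by
      rw [div_le_iff₀ hpos]; nlinarith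
    linarith
  · refine le_trans (min_le_right _ _) ?_
    have : Real.exp (-x) ≤ Real.exp (-2) := Real.exp_le_exp.mpr (by linarith)
    have h2' : (2:ℝ) ≤ Real.exp 2 := by
      have := Real.add_one_le_exp 2; linarith
    have : Real.exp (-2) ≤ 1 / 2 := by
      rw [Real.exp_neg]
      rw [inv_eq_one_div]
      exact one_div_le_one_div_of_le (by norm_num) h2'
    linarith

lemma aux_real (m : ℕ) (q : ℝ) (hq0 : 0 ≤ q) (hq1 : q ≤ 1) :
    min (m * q / 4) (1 / 2) ≤ 1 - (1 - q) ^ m := by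
  have h1 : (1 - q) ^ m ≤ Real.exp (-(m * q)) := by
    have hb : 1 - q ≤ Real.exp (-q) := by
      have := Real.add_one_le_exp (-q); linarith
    calc (1 - q) ^ m ≤ (Real.exp (-q)) ^ m :=
          pow_le_pow_left₀ (by linarith) hb m
      _ = Real.exp (-(m * q)) := by
          rw [← Real.exp_nat_mul]; ring_nf
  have h2 := aux_exp (m * q) (by positivity)
  linarith


/-- Let `p ≤ n` be positive integers, `α ≥ 2`, `c₀ > 0`, and let `w` be a real random variable
with `E[w] = 0`, `E[w²] = 1`, satisfying `P(|w| ≥ t) ≥ c₀ / t^α` for all `t ≥ 1`.  Let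
`W = (w_{ij})` be a `p × n` random matrix whose entries are i.i.d. copies of `w`, and let
`Xᵢ ∈ ℝⁿ` be the `i`-th row of `W` (so `|Xᵢ|² = Σ_j w_{ij}²`).  Then for every `K ≥ 1`,
`P(max_i |Xᵢ| ≥ √(Kn)) ≥ min{c₀ p / (4 n^(α/2 − 1) K^(α/2)), 1/2}`. -/
theorem stmt_0 {Ω : Type*} [MeasureSpace Ω] [IsProbabilityMeasure (ℙ : Measure Ω)]
    (p n : ℕ) (hp : 0 < p) (hpn : p ≤ n)
    (α c₀ : ℝ) (hα : 2 ≤ α) (hc₀ : 0 < c₀)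
    (w : Ω → ℝ) (hmean : ∫ ω, w ω = 0) (hvar : ∫ ω, (w ω) ^ 2 = 1)
    (htail : ∀ t : ℝ, 1 ≤ t → ENNReal.ofReal (c₀ / t ^ α) ≤ ℙ {ω | t ≤ |w ω|})
    (W : Fin p → Fin n → Ω → ℝ)
    (hindep : iIndepFun (fun ij : Fin p × Fin n => W ij.1 ij.2) ℙ)
    (hident : ∀ i j, IdentDistrib (W i j) w ℙ ℙ)
    (K : ℝ) (hK : 1 ≤ K) :
    ENNReal.ofReal (min (c₀ * p / (4 * (n : ℝ) ^ (α / 2 - 1) * K ^ (α / 2))) (1 / 2))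
      ≤ ℙ {ω | Real.sqrt (K * n) ≤ ⨆ i, Real.sqrt (∑ j, (W i j ω) ^ 2)} := by
  have hn : 0 < n := hp.trans_le hpn
  have hn1 : (1:ℝ) ≤ (n:ℝ) := by exact_mod_cast hn
  set t : ℝ := Real.sqrt (K * n) with ht_def
  set E : Set Ω := {ω | t ≤ ⨆ i, Real.sqrt (∑ j, (W i j ω) ^ 2)} with hE_def
  have hKn : (1:ℝ) ≤ K * n := by nlinarith
  have ht1 : 1 ≤ t := by
    rw [ht_def, show (1:ℝ) = Real.sqrt 1 from Real.sqrt_one.symm]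
    exact Real.sqrt_le_sqrt hKn
  have ht0 : (0:ℝ) < t := by linarith
  set q : ℝ := c₀ / t ^ α with hq_def
  have hq0 : 0 ≤ q := div_nonneg hc₀.le (Real.rpow_nonneg ht0.le α)
  have hq1 : q ≤ 1 := by
    have h := (htail t ht1).trans prob_le_one
    exact ENNReal.ofReal_le_one.mp h
  -- the per-entry sets
  set s : Fin p × Fin n → Set Ω :=
    fun ij => (fun ij : Fin p × Fin n => W ij.1 ij.2) ij ⁻¹' {x : ℝ | |x| < t} with hs_def
  have hB : MeasurableSet {x : ℝ | |x| < t} := measurableSet_lt measurable_abs measurable_const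
  have hBc : MeasurableSet {x : ℝ | t ≤ |x|} := measurableSet_le measurable_const measurable_abs
  have hcompl : {x : ℝ | t ≤ |x|}ᶜ = {x : ℝ | |x| < t} := by
    ext x; simp [not_le]
  -- complement of the event is contained in the intersection
  have hsub : Eᶜ ⊆ ⋂ ij, s ij := by
    intro ω hω
    simp only [hE_def, Set.mem_compl_iff, Set.mem_setOf_eq, not_le] at hω
    refine Set.mem_iInter.mpr fun ij => ?_
    by_contra h
    simp only [hs_def, Set.mem_preimage, Set.mem_setOf_eq, not_lt] at h
    have h1 : t ≤ Real.sqrt (∑ j, (W ij.1 j ω) ^ 2) := by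
      calc t ≤ |W ij.1 ij.2 ω| := h
        _ = Real.sqrt ((W ij.1 ij.2 ω) ^ 2) := (Real.sqrt_sq_eq_abs _).symm
        _ ≤ Real.sqrt (∑ j, (W ij.1 j ω) ^ 2) :=
            Real.sqrt_le_sqrt (Finset.single_le_sum (f := fun j => (W ij.1 j ω) ^ 2)
              (fun j _ => sq_nonneg _) (Finset.mem_univ ij.2))
    have h2 : Real.sqrt (∑ j, (W ij.1 j ω) ^ 2) ≤ ⨆ i, Real.sqrt (∑ j, (W i j ω) ^ 2) :=
      le_ciSup (f := fun i => Real.sqrt (∑ j, (W i j ω) ^ 2))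
        (Set.Finite.bddAbove (Set.finite_range _)) ij.1
    exact absurd (h1.trans h2) (not_le.mpr hω)
  -- per-entry measure bound
  have hone : ∀ ij : Fin p × Fin n, ℙ (s ij) ≤ 1 - ENNReal.ofReal q := by
    intro ij
    have hid := hident ij.1 ij.2
    have ham := hid.aemeasurable_fst
    have hmw := hid.aemeasurable_snd
    have hmap : ℙ (s ij) = (Measure.map w ℙ) {x : ℝ | |x| < t} := by
      rw [hs_def]
      rw [← Measure.map_apply_of_aemeasurable ham hB, hid.map_eq]
    have hprob : IsProbabilityMeasure (Measure.map w ℙ) := Measure.isProbabilityMeasure_map hmw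
    have hc : (Measure.map w ℙ) {x : ℝ | |x| < t} = 1 - (Measure.map w ℙ) {x : ℝ | t ≤ |x|} := by
      rw [← hcompl]
      exact prob_compl_eq_one_sub hBc
    have htw : ENNReal.ofReal q ≤ (Measure.map w ℙ) {x : ℝ | t ≤ |x|} := by
      rw [Measure.map_apply_of_aemeasurable hmw hBc]
      exact htail t ht1
    rw [hmap, hc]
    exact tsub_le_tsub_left htw 1
  -- independence: product
  have hprod : ℙ (⋂ ij, s ij) = ∏ ij : Fin p × Fin n, ℙ (s ij) :=
    hindep.meas_iInter fun ij => ⟨{x : ℝ | |x| < t}, hB, rfl⟩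
  have hEc : ℙ Eᶜ ≤ ENNReal.ofReal ((1 - q) ^ (p * n)) := by
    have h1 : ENNReal.ofReal ((1 - q) ^ (p * n)) = (1 - ENNReal.ofReal q) ^ (p * n) := by
      rw [ENNReal.ofReal_pow (by linarith), ENNReal.ofReal_sub 1 hq0, ENNReal.ofReal_one]
    calc ℙ Eᶜ ≤ ℙ (⋂ ij, s ij) := measure_mono hsub
      _ = ∏ ij : Fin p × Fin n, ℙ (s ij) := hprod
      _ ≤ ∏ _ij : Fin p × Fin n, (1 - ENNReal.ofReal q) :=
          Finset.prod_le_prod' fun ij _ => hone ij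
      _ = (1 - ENNReal.ofReal q) ^ (p * n) := by
          rw [Finset.prod_const]; simp [Finset.card_univ]
      _ = ENNReal.ofReal ((1 - q) ^ (p * n)) := h1.symm
  have hE_lower : 1 - ENNReal.ofReal ((1 - q) ^ (p * n)) ≤ ℙ E := by
    have h1 : (1:ENNReal) ≤ ℙ E + ℙ Eᶜ := by
      calc (1:ENNReal) = ℙ (Set.univ : Set Ω) := (measure_univ).symm
        _ = ℙ (E ∪ Eᶜ) := by rw [Set.union_compl_self]
        _ ≤ ℙ E + ℙ Eᶜ := measure_union_le _ _
    calc 1 - ENNReal.ofReal ((1 - q) ^ (p * n)) ≤ 1 - ℙ Eᶜ := tsub_le_tsub_left hEc 1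
      _ ≤ ℙ E := by rw [tsub_le_iff_right]; exact h1
  -- algebra: rewrite the min expression
  have hta : t ^ α = K ^ (α / 2) * (n:ℝ) ^ (α / 2) := by
    rw [ht_def, Real.sqrt_eq_rpow, ← Real.rpow_mul (by linarith : (0:ℝ) ≤ K * (n:ℝ)),
      show 1 / 2 * α = α / 2 by ring,
      Real.mul_rpow (by linarith : (0:ℝ) ≤ K) (by linarith : (0:ℝ) ≤ (n:ℝ))]
  have hM : c₀ * p / (4 * (n:ℝ) ^ (α / 2 - 1) * K ^ (α / 2)) = ((p * n : ℕ) : ℝ) * q / 4 := by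
    have hA : (0:ℝ) < (n:ℝ) ^ (α / 2 - 1) := Real.rpow_pos_of_pos (by linarith) _
    have hBp : (0:ℝ) < K ^ (α / 2) := Real.rpow_pos_of_pos (by linarith) _
    have hnr : (n:ℝ) ^ (α / 2) = (n:ℝ) ^ (α / 2 - 1) * n := by
      calc (n:ℝ) ^ (α / 2) = (n:ℝ) ^ (α / 2 - 1 + 1) := by congr 1; ring
        _ = (n:ℝ) ^ (α / 2 - 1) * n := by
            rw [Real.rpow_add (by linarith : (0:ℝ) < (n:ℝ)), Real.rpow_one]
    rw [hq_def, hta, hnr]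
    push_cast
    field_simp
  rw [hM]
  calc ENNReal.ofReal (min (((p * n : ℕ) : ℝ) * q / 4) (1 / 2))
      ≤ ENNReal.ofReal (1 - (1 - q) ^ (p * n)) :=
        ENNReal.ofReal_le_ofReal (aux_real (p * n) q hq0 hq1)
    _ = 1 - ENNReal.ofReal ((1 - q) ^ (p * n)) := by
        rw [ENNReal.ofReal_sub 1 (pow_nonneg (by linarith) _), ENNReal.ofReal_one]
    _ ≤ ℙ E := hE_lower
end

section
/- Let p ≤ n be positive integers, let α ≥ 2 and c₀ > 0, and let w be a real random variable with E[w] = 0, E[w²] = 1, satisfying P(|w| ≥ t) ≥ c₀/t^α for all t ≥ 1. Let W = (w_{ij}) be a p × n random matrix whose entries are i.i.d. copies of w, and let Γ = (1/n) W Wᵀ be the sample covariance matrix. Then for every K ≥ 1, P( λ_max(Γ) ≥ K ) ≥ min{ c₀ p / (4 n^{α/2 − 1} K^{α/2}), 1/2 }, where λ_max(Γ) denotes the largest eigenvalue of the symmetric positive semidefinite matrix Γ. -/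
open MeasureTheory ProbabilityTheory Matrix

/-- The largest eigenvalue of a real (symmetric) matrix, defined as the supremum of its
spectrum.  For a real symmetric matrix the spectrum is exactly the (nonempty, finite) set of
its eigenvalues, so this is the largest eigenvalue. -/
noncomputable def lambdaMax {p : ℕ} (A : Matrix (Fin p) (Fin p) ℝ) : ℝ :=
  sSup (spectrum ℝ A)

lemma diag_le_lambdaMax {m : ℕ} (A : Matrix (Fin m) (Fin m) ℝ) (hA : A.IsHermitian)
    (i : Fin m) : A i i ≤ lambdaMax A := by
  have hspec : spectrum ℝ A = Set.range hA.eigenvalues := hA.spectrum_real_eq_range_eigenvalues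
  have hbdd : BddAbove (spectrum ℝ A) := hspec ▸ (Set.finite_range _).bddAbove
  have hle : ∀ k, hA.eigenvalues k ≤ lambdaMax A := fun k =>
    le_csSup hbdd (hspec ▸ Set.mem_range_self k)
  set U : Matrix (Fin m) (Fin m) ℝ := (hA.eigenvectorUnitary : Matrix (Fin m) (Fin m) ℝ) with hUdef
  have hU : U * star U = 1 := Matrix.mem_unitaryGroup_iff.mp hA.eigenvectorUnitary.2
  have hrow : ∑ k, (U i k) ^ 2 = 1 := by
    have h2 := congrFun (congrFun hU i) i
    simpa [Matrix.mul_apply, Matrix.one_apply, sq, Matrix.star_apply, hUdef] using h2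
  have hAii : A i i = ∑ k, hA.eigenvalues k * (U i k) ^ 2 := by
    conv_lhs => rw [hA.spectral_theorem, Unitary.conjStarAlgAut_apply]
    simp only [Matrix.mul_apply, Matrix.diagonal_apply, Matrix.star_apply, star_trivial,
      Function.comp_apply, mul_ite, mul_zero, ite_mul, zero_mul, Finset.sum_ite_eq,
      Finset.mem_univ, if_true, ← hUdef]
    congr 1; ext k
    simp [sq]
    ring
  rw [hAii]
  calc ∑ k, hA.eigenvalues k * (U i k) ^ 2 ≤ ∑ k, lambdaMax A * (U i k) ^ 2 :=
        Finset.sum_le_sum fun k _ => mul_le_mul_of_nonneg_right (hle k) (sq_nonneg _)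
    _ = lambdaMax A := by rw [← Finset.mul_sum, hrow, mul_one]

lemma min_le_one_sub_pow (m : ℕ) (q : ℝ) (hq0 : 0 ≤ q) (hq1 : q ≤ 1) :
    min (m * q / 2) (1 / 2) ≤ 1 - (1 - q) ^ m := by
  have hmq0 : 0 ≤ (m : ℝ) * q := by positivity
  have hden : (0:ℝ) < 1 + m * q := by linarith
  have hB : 1 + (m:ℝ) * q ≤ (1 + q) ^ m := by
    have := one_add_mul_le_pow (a := q) (by linarith) m
    linarith [this]
  have hprod : (1 - q) ^ m * (1 + q) ^ m ≤ 1 := by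
    rw [← mul_pow]
    have h1 : (1 - q) * (1 + q) = 1 - q ^ 2 := by ring
    rw [h1]
    apply pow_le_one₀ (by nlinarith) (by nlinarith)
  have hkey : (1 - q) ^ m * (1 + m * q) ≤ 1 := by
    have h0 : (0:ℝ) ≤ (1 - q) ^ m := pow_nonneg (by linarith) m
    calc (1 - q) ^ m * (1 + m * q) ≤ (1 - q) ^ m * (1 + q) ^ m :=
          mul_le_mul_of_nonneg_left hB h0
      _ ≤ 1 := hprod
  have hle : (1 - q) ^ m ≤ 1 / (1 + m * q) := by
    rw [le_div_iff₀ hden]; exact hkey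
  have hmain : (m : ℝ) * q / (1 + m * q) ≤ 1 - (1 - q) ^ m := by
    have : (m : ℝ) * q / (1 + m * q) = 1 - 1 / (1 + m * q) := by
      field_simp
      ring
    rw [this]; linarith
  refine le_trans ?_ hmain
  rcases le_total ((m:ℝ) * q) 1 with h | h
  · exact le_trans (min_le_left _ _)
      (div_le_div_of_nonneg_left hmq0 hden (by linarith))
  · refine le_trans (min_le_right _ _) ?_
    rw [div_le_div_iff₀ (by norm_num) hden]
    linarith

/-- Let `p ≤ n` be positive integers, `α ≥ 2`, `c₀ > 0`, and let `w` be a real random variable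
with `E[w] = 0`, `E[w²] = 1`, satisfying `P(|w| ≥ t) ≥ c₀ / t^α` for all `t ≥ 1`.  Let
`W = (w_{ij})` be a `p × n` random matrix with i.i.d. entries distributed as `w`, and let
`Γ = (1/n) W Wᵀ` be the sample covariance matrix.  Then for every `K ≥ 1`,
`P(λ_max(Γ) ≥ K) ≥ min{c₀ p / (4 n^(α/2 − 1) K^(α/2)), 1/2}`. -/
theorem stmt_1 {Ω : Type*} [MeasureSpace Ω] [IsProbabilityMeasure (ℙ : Measure Ω)]
    (p n : ℕ) (hp : 0 < p) (hpn : p ≤ n)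
    (α c₀ : ℝ) (hα : 2 ≤ α) (hc₀ : 0 < c₀)
    (w : Ω → ℝ) (hmean : ∫ ω, w ω = 0) (hvar : ∫ ω, (w ω) ^ 2 = 1)
    (htail : ∀ t : ℝ, 1 ≤ t → ENNReal.ofReal (c₀ / t ^ α) ≤ ℙ {ω | t ≤ |w ω|})
    (W : Fin p → Fin n → Ω → ℝ)
    (hindep : iIndepFun (fun ij : Fin p × Fin n => W ij.1 ij.2) ℙ)
    (hident : ∀ i j, IdentDistrib (W i j) w ℙ ℙ)
    (K : ℝ) (hK : 1 ≤ K) :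
    ENNReal.ofReal (min (c₀ * p / (4 * (n : ℝ) ^ (α / 2 - 1) * K ^ (α / 2))) (1 / 2))
      ≤ ℙ {ω | K ≤ lambdaMax ((1 / (n : ℝ)) •
            (Matrix.of (fun i j => W i j ω) * (Matrix.of (fun i j => W i j ω))ᵀ))} := by
  have hn : 0 < n := lt_of_lt_of_le hp hpn
  have hn0 : (0:ℝ) < n := by exact_mod_cast hn
  have hnK1 : (1:ℝ) ≤ (n:ℝ) * K := by
    have : (1:ℝ) ≤ (n:ℝ) := by exact_mod_cast hn
    nlinarith
  set t : ℝ := Real.sqrt ((n:ℝ) * K) with htdef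
  have ht1 : 1 ≤ t := by
    rw [htdef, show (1:ℝ) = Real.sqrt 1 by simp]
    exact Real.sqrt_le_sqrt hnK1
  have ht0 : 0 < t := lt_of_lt_of_le one_pos ht1
  have htsq : t ^ 2 = (n:ℝ) * K := Real.sq_sqrt (by linarith)
  have htα : t ^ α = ((n:ℝ) * K) ^ (α / 2) := by
    rw [htdef, Real.sqrt_eq_rpow, ← Real.rpow_mul (by linarith : (0:ℝ) ≤ (n:ℝ)*K)]
    ring_nf
  set S : Set ℝ := {x : ℝ | t ≤ |x|} with hSdef
  have hS : MeasurableSet S := measurableSet_le measurable_const continuous_abs.measurable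
  set q : ℝ := c₀ / t ^ α with hqdef
  have htα0 : (0:ℝ) < t ^ α := Real.rpow_pos_of_pos ht0 α
  have hq0 : 0 ≤ q := div_nonneg hc₀.le htα0.le
  have hqP : ENNReal.ofReal q ≤ ℙ {ω | t ≤ |w ω|} := htail t ht1
  have hq1 : q ≤ 1 := ENNReal.ofReal_le_one.mp (le_trans hqP prob_le_one)
  have hEntry : ∀ i j, ENNReal.ofReal q ≤ ℙ ((fun ω => W i j ω) ⁻¹' S) := by
    intro i j
    rw [(hident i j).measure_mem_eq hS]
    exact hqP
  have hCompl : ∀ i j, ℙ ((fun ω => W i j ω) ⁻¹' Sᶜ) ≤ 1 - ENNReal.ofReal q := by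
    intro i j
    have hnm : NullMeasurableSet ((fun ω => W i j ω) ⁻¹' S) ℙ :=
      (hident i j).aemeasurable_fst.nullMeasurable hS
    rw [Set.preimage_compl, prob_compl_eq_one_sub₀ hnm]
    exact tsub_le_tsub_left (hEntry i j) 1
  set C : Set Ω := ⋂ ij : Fin p × Fin n, (fun ω => W ij.1 ij.2 ω) ⁻¹' Sᶜ with hCdef
  have hCprod : ℙ C = ∏ ij : Fin p × Fin n, ℙ ((fun ω => W ij.1 ij.2 ω) ⁻¹' Sᶜ) :=
    hindep.meas_iInter fun ij => ⟨Sᶜ, hS.compl, rfl⟩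
  have hCle : ℙ C ≤ (1 - ENNReal.ofReal q) ^ (p * n) := by
    rw [hCprod]
    calc ∏ ij : Fin p × Fin n, ℙ ((fun ω => W ij.1 ij.2 ω) ⁻¹' Sᶜ)
        ≤ ∏ _ij : Fin p × Fin n, (1 - ENNReal.ofReal q) :=
          Finset.prod_le_prod' fun ij _ => hCompl ij.1 ij.2
      _ = (1 - ENNReal.ofReal q) ^ (p * n) := by
          rw [Finset.prod_const, Finset.card_univ, Fintype.card_prod, Fintype.card_fin,
            Fintype.card_fin]
  have h1q : (1 : ENNReal) - ENNReal.ofReal q = ENNReal.ofReal (1 - q) := by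
    rw [ENNReal.ofReal_sub _ hq0, ENNReal.ofReal_one]
  have hCle' : ℙ C ≤ ENNReal.ofReal ((1 - q) ^ (p * n)) := by
    rw [ENNReal.ofReal_pow (by linarith), ← h1q]
    exact hCle
  have hsub : Cᶜ ⊆ {ω | K ≤ lambdaMax ((1 / (n : ℝ)) •
      (Matrix.of (fun i j => W i j ω) * (Matrix.of (fun i j => W i j ω))ᵀ))} := by
    intro ω hω
    simp only [hCdef, Set.compl_iInter, Set.mem_iUnion, Set.mem_compl_iff, Set.mem_preimage,
      Set.mem_compl_iff, not_not, hSdef, Set.mem_setOf_eq] at hω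
    obtain ⟨⟨i, j⟩, hij⟩ := hω
    set M : Matrix (Fin p) (Fin n) ℝ := Matrix.of (fun a b => W a b ω) with hMdef
    have hHerm : ((1 / (n : ℝ)) • (M * Mᵀ)).IsHermitian := by
      have h1 : (M * Mᵀ).IsHermitian := by
        rw [← Matrix.conjTranspose_eq_transpose_of_trivial]
        exact Matrix.isHermitian_mul_conjTranspose_self M
      unfold Matrix.IsHermitian at h1 ⊢
      rw [Matrix.conjTranspose_smul, h1, star_trivial]
    have hsum : (W i j ω) ^ 2 ≤ ∑ k, (W i k ω) ^ 2 :=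
      Finset.single_le_sum (f := fun k => (W i k ω) ^ 2) (fun k _ => sq_nonneg _)
        (Finset.mem_univ j)
    have ht2 : (n : ℝ) * K ≤ (W i j ω) ^ 2 := by
      calc (n : ℝ) * K = t ^ 2 := htsq.symm
        _ ≤ |W i j ω| ^ 2 := pow_le_pow_left₀ ht0.le hij 2
        _ = (W i j ω) ^ 2 := sq_abs _
    have hΓ : ((1 / (n : ℝ)) • (M * Mᵀ)) i i = (1 / (n : ℝ)) * ∑ k, (W i k ω) ^ 2 := by
      simp [hMdef, Matrix.mul_apply, sq]
    have hdiag : K ≤ ((1 / (n : ℝ)) • (M * Mᵀ)) i i := by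
      rw [hΓ]
      calc K = (1 / (n : ℝ)) * ((n : ℝ) * K) := by field_simp
        _ ≤ (1 / (n : ℝ)) * ∑ k, (W i k ω) ^ 2 :=
            mul_le_mul_of_nonneg_left (le_trans ht2 hsum) (by positivity)
    exact le_trans hdiag (diag_le_lambdaMax _ hHerm i)
  have hUnion : 1 - ℙ C ≤ ℙ Cᶜ := by
    rw [tsub_le_iff_right]
    calc (1 : ENNReal) = ℙ (Cᶜ ∪ C) := by rw [Set.compl_union_self]; simp
      _ ≤ ℙ Cᶜ + ℙ C := measure_union_le _ _
  have hmin : min (c₀ * p / (4 * (n : ℝ) ^ (α / 2 - 1) * K ^ (α / 2))) (1 / 2)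
      ≤ 1 - (1 - q) ^ (p * n) := by
    refine le_trans ?_ (min_le_one_sub_pow (p * n) q hq0 hq1)
    refine min_le_min ?_ le_rfl
    have hA : (0:ℝ) < (n : ℝ) ^ (α / 2 - 1) := Real.rpow_pos_of_pos hn0 _
    have hB : (0:ℝ) < K ^ (α / 2) := Real.rpow_pos_of_pos (by linarith) _
    have hsplit : t ^ α = (n : ℝ) ^ (α / 2) * K ^ (α / 2) := by
      rw [htα, Real.mul_rpow hn0.le (by linarith)]
    have hnpow : (n : ℝ) ^ (α / 2) = (n : ℝ) * (n : ℝ) ^ (α / 2 - 1) := by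
      have h := Real.rpow_add hn0 1 (α / 2 - 1)
      rw [show (1:ℝ) + (α / 2 - 1) = α / 2 by ring] at h
      rw [h, Real.rpow_one]
    have hq : ((p * n : ℕ) : ℝ) * q / 2
        = c₀ * p / (2 * (n : ℝ) ^ (α / 2 - 1) * K ^ (α / 2)) := by
      rw [hqdef, hsplit, hnpow]
      push_cast
      field_simp
    rw [hq]
    apply div_le_div_of_nonneg_left (by positivity) (by positivity)
    nlinarith [mul_pos hA hB]
  calc ENNReal.ofReal (min (c₀ * p / (4 * (n : ℝ) ^ (α / 2 - 1) * K ^ (α / 2))) (1 / 2))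
      ≤ ENNReal.ofReal (1 - (1 - q) ^ (p * n)) := ENNReal.ofReal_le_ofReal hmin
    _ = 1 - ENNReal.ofReal ((1 - q) ^ (p * n)) := by
        rw [ENNReal.ofReal_sub _ (pow_nonneg (by linarith) _), ENNReal.ofReal_one]
    _ ≤ 1 - ℙ C := tsub_le_tsub_left hCle' 1
    _ ≤ ℙ Cᶜ := hUnion
    _ ≤ _ := measure_mono hsub
end

section
/- Let n ≥ 1 and let w₁, …, w_n be i.i.d. real random variables, each distributed as a random variable w with E[w] = 0 and E[w²] = 1. Then for every K ≥ 1, P( (1/n) Σ_{j=1}^n w_j² ≥ K ) ≥ (n/2) · P( w² ≥ nK ). -/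
open MeasureTheory ProbabilityTheory

lemma aux_pow_le (p : ℝ) (hp0 : 0 ≤ p) (hp1 : p ≤ 1) :
    ∀ n : ℕ, (1 - p) ^ n ≤ 1 - n * p + (n * (n - 1) / 2) * p ^ 2 := by
  intro n
  induction n with
  | zero => simp
  | succ m ih =>
    have h1 : (0:ℝ) ≤ 1 - p := by linarith
    have h2 : (1 - p) ^ (m + 1) = (1 - p) ^ m * (1 - p) := by ring
    have h3 : (1 - p) ^ m * (1 - p) ≤ (1 - m * p + (m * (m - 1) / 2) * p ^ 2) * (1 - p) :=
      mul_le_mul_of_nonneg_right ih h1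
    have hm : (0:ℝ) ≤ m := Nat.cast_nonneg m
    have hc : (0:ℝ) ≤ (m * (m - 1) / 2) * p ^ 3 := by
      rcases Nat.eq_zero_or_pos m with h | h
      · subst h; simp
      · have hm1 : (1:ℝ) ≤ m := by exact_mod_cast h
        have h6 : (0:ℝ) ≤ (m:ℝ) * ((m:ℝ) - 1) / 2 :=
          div_nonneg (mul_nonneg (by linarith) (by linarith)) (by norm_num)
        exact mul_nonneg h6 (pow_nonneg hp0 3)
    push_cast
    nlinarith [h3, hc, h2]

lemma aux_key (n : ℕ) (p : ℝ) (hp0 : 0 ≤ p) (hp1 : p ≤ 1) (hnp : n * p ≤ 1) :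
    (n : ℝ) * p / 2 ≤ 1 - (1 - p) ^ n := by
  have h := aux_pow_le p hp0 hp1 n
  have hm : (0:ℝ) ≤ n := Nat.cast_nonneg n
  have h5 : ((n:ℝ) - 1) * p ≤ 1 := by nlinarith
  have hfin : 0 ≤ ((n:ℝ) * p / 2) * (1 - ((n:ℝ) - 1) * p) :=
    mul_nonneg (by positivity) (by linarith)
  nlinarith [h, hfin]

/-- Let `w₁, …, w_n` (`n ≥ 1`) be i.i.d. real random variables, each distributed as a random
variable `w` with `E[w] = 0` and `E[w²] = 1`.  Then for every `K ≥ 1`,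
`P((1/n) Σ w_j² ≥ K) ≥ (n/2) · P(w² ≥ nK)`. -/
theorem stmt_4 {Ω : Type*} [MeasureSpace Ω] [IsProbabilityMeasure (ℙ : Measure Ω)]
    (n : ℕ) (hn : 1 ≤ n)
    (w : Ω → ℝ) (hmean : ∫ ω, w ω = 0) (hvar : ∫ ω, (w ω) ^ 2 = 1)
    (ws : Fin n → Ω → ℝ)
    (hindep : iIndepFun ws ℙ)
    (hident : ∀ j, IdentDistrib (ws j) w ℙ ℙ)
    (K : ℝ) (hK : 1 ≤ K) :
    ENNReal.ofReal ((n : ℝ) / 2) * ℙ {ω | (n : ℝ) * K ≤ (w ω) ^ 2}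
      ≤ ℙ {ω | K ≤ (1 / (n : ℝ)) * ∑ j, (ws j ω) ^ 2} := by
  have hn0 : (0:ℝ) < n := by exact_mod_cast hn
  -- the threshold set on ℝ
  set S : Set ℝ := {x | (n : ℝ) * K ≤ x ^ 2} with hSdef
  have hS : MeasurableSet S := measurableSet_le measurable_const ((measurable_id.pow_const 2))
  -- w is aemeasurable
  have hwae : AEMeasurable w ℙ := (hident ⟨0, hn⟩).aemeasurable_snd
  -- pushforward measure
  set μw : Measure ℝ := Measure.map w ℙ with hμw
  have hμwp : IsProbabilityMeasure μw := Measure.isProbabilityMeasure_map hwae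
  have hpre : ∀ (T : Set ℝ), MeasurableSet T → ℙ (w ⁻¹' T) = μw T := fun T hT =>
    (Measure.map_apply_of_aemeasurable hwae hT).symm
  -- probability p
  set pE : ENNReal := ℙ (w ⁻¹' S) with hpE
  have hpES : pE = μw S := hpre S hS
  have hpE1 : pE ≤ 1 := prob_le_one
  have hpEtop : pE ≠ ⊤ := (lt_of_le_of_lt hpE1 ENNReal.one_lt_top).ne
  set p : ℝ := pE.toReal with hp
  have hp0 : 0 ≤ p := ENNReal.toReal_nonneg
  have hp1 : p ≤ 1 := by
    rw [hp]
    exact ENNReal.toReal_le_of_le_ofReal zero_le_one (by simpa using hpE1)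
  -- integrability of w^2
  have hint : Integrable (fun ω => (w ω) ^ 2) ℙ := by
    by_contra h
    rw [integral_undef h] at hvar
    norm_num at hvar
  -- Chebyshev / Markov: n * K * p ≤ 1
  have hcheb : (n : ℝ) * K * p ≤ 1 := by
    have := mul_meas_ge_le_integral_of_nonneg
      (ae_of_all ℙ fun ω => sq_nonneg (w ω)) hint ((n : ℝ) * K)
    rw [hvar, measureReal_def] at this
    simpa [hp, hpE, hSdef, Set.preimage_setOf_eq] using this
  have hnp : (n : ℝ) * p ≤ 1 := by nlinarith
  -- events
  set A : Fin n → Set Ω := fun j => ws j ⁻¹' S with hA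
  -- each A j has probability pE, complement has 1 - pE
  have hAc : ∀ j, ℙ ((A j)ᶜ) = 1 - pE := by
    intro j
    have h1 : (A j)ᶜ = ws j ⁻¹' Sᶜ := by rw [hA]; rfl
    have h2 : ℙ (ws j ⁻¹' Sᶜ) = ℙ (w ⁻¹' Sᶜ) := (hident j).measure_mem_eq hS.compl
    have h3 : ℙ (w ⁻¹' Sᶜ) = μw Sᶜ := hpre _ hS.compl
    have h4 : μw Sᶜ = 1 - μw S := by
      rw [measure_compl hS (measure_ne_top μw S), measure_univ]
    rw [h1, h2, h3, h4, hpES]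
  -- independence: product formula
  have hprod : ℙ (⋂ j, (A j)ᶜ) = ∏ j : Fin n, ℙ ((A j)ᶜ) := by
    have : ∀ j, (A j)ᶜ = ws j ⁻¹' Sᶜ := fun j => rfl
    simp_rw [this]
    have := hindep.measure_inter_preimage_eq_mul (S := Finset.univ)
      (sets := fun _ => Sᶜ) (fun i _ => hS.compl)
    simpa using this
  have hprodval : ℙ (⋂ j, (A j)ᶜ) = (1 - pE) ^ n := by
    rw [hprod]
    simp [hAc]
  -- union of A's is inside the target event
  have hsub : (⋃ j, A j) ⊆ {ω | K ≤ (1 / (n : ℝ)) * ∑ j, (ws j ω) ^ 2} := by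
    rintro ω ⟨_, ⟨j, rfl⟩, hj⟩
    have hj' : (n : ℝ) * K ≤ (ws j ω) ^ 2 := hj
    have hsum : (ws j ω) ^ 2 ≤ ∑ i : Fin n, (ws i ω) ^ 2 :=
      Finset.single_le_sum (fun i _ => sq_nonneg (ws i ω)) (Finset.mem_univ j)
    have : (n : ℝ) * K ≤ ∑ i : Fin n, (ws i ω) ^ 2 := le_trans hj' hsum
    show K ≤ (1 / (n : ℝ)) * ∑ i : Fin n, (ws i ω) ^ 2
    rw [one_div, inv_mul_eq_div, le_div_iff₀ hn0]
    linarith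
  -- 1 ≤ ℙ(⋃ A) + ℙ(⋂ Aᶜ)
  have hcover : (1 : ENNReal) ≤ ℙ (⋃ j, A j) + ℙ (⋂ j, (A j)ᶜ) := by
    have : (Set.univ : Set Ω) ⊆ (⋃ j, A j) ∪ (⋂ j, (A j)ᶜ) := by
      intro ω _
      by_cases h : ∃ j, ω ∈ A j
      · exact Or.inl (Set.mem_iUnion.2 h)
      · exact Or.inr (Set.mem_iInter.2 fun j => fun hj => h ⟨j, hj⟩)
    calc (1 : ENNReal) = ℙ (Set.univ : Set Ω) := measure_univ.symm
      _ ≤ ℙ ((⋃ j, A j) ∪ (⋂ j, (A j)ᶜ)) := measure_mono this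
      _ ≤ _ := measure_union_le _ _
  -- convert to real numbers
  set B : Set Ω := {ω | K ≤ (1 / (n : ℝ)) * ∑ j, (ws j ω) ^ 2} with hB
  have hBtop : ℙ B ≠ ⊤ := (measure_lt_top ℙ B).ne
  have hUle : ℙ (⋃ j, A j) ≤ ℙ B := measure_mono hsub
  have hUtop : ℙ (⋃ j, A j) ≠ ⊤ := (lt_of_le_of_lt hUle (measure_lt_top ℙ B)).ne
  have hItop : ℙ (⋂ j, (A j)ᶜ) ≠ ⊤ := (measure_lt_top ℙ _).ne
  -- real value of the intersection
  have hIreal : (ℙ (⋂ j, (A j)ᶜ)).toReal = (1 - p) ^ n := by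
    rw [hprodval, ENNReal.toReal_pow, ENNReal.toReal_sub_of_le hpE1 (by simp)]
    simp [hp]
  have hcoverR : 1 ≤ (ℙ (⋃ j, A j)).toReal + (1 - p) ^ n := by
    rw [← hIreal, ← ENNReal.toReal_add hUtop hItop]
    have := ENNReal.toReal_mono (by finiteness) hcover
    simpa using this
  have hBreal : (n : ℝ) * p / 2 ≤ (ℙ B).toReal := by
    have h1 : (n : ℝ) * p / 2 ≤ 1 - (1 - p) ^ n := aux_key n p hp0 hp1 hnp
    have h2 : 1 - (1 - p) ^ n ≤ (ℙ (⋃ j, A j)).toReal := by linarith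
    have h3 : (ℙ (⋃ j, A j)).toReal ≤ (ℙ B).toReal := ENNReal.toReal_mono hBtop hUle
    linarith
  -- final conversion
  have hset : {ω | (n : ℝ) * K ≤ (w ω) ^ 2} = w ⁻¹' S := rfl
  rw [hset, ← hpE]
  calc ENNReal.ofReal ((n : ℝ) / 2) * pE
      = ENNReal.ofReal ((n : ℝ) / 2) * ENNReal.ofReal p := by
        rw [hp, ENNReal.ofReal_toReal hpEtop]
    _ = ENNReal.ofReal ((n : ℝ) * p / 2) := by
        rw [← ENNReal.ofReal_mul (by positivity)]; ring_nf
    _ ≤ ℙ B := by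
        rw [ENNReal.ofReal_le_iff_le_toReal hBtop]; exact hBreal
end

section
/- Let p ≤ n be positive integers and let w be a real random variable with E[w] = 0 and E[w²] = 1. Let W = (w_{ij}), 1 ≤ i ≤ p, 1 ≤ j ≤ n, be a p × n random matrix whose entries are i.i.d. copies of w, and let X_i ∈ ℝⁿ denote the i-th row of W. Then for every K ≥ 1, P( max_{1 ≤ i ≤ p} |X_i| ≥ √(Kn) ) ≥ 1 − (1 − (n/2) P(w² ≥ nK))^p. -/
open MeasureTheory ProbabilityTheory
open scoped ENNReal

lemma aux_pow5 (n : ℕ) (q : ℝ) (hq : 0 ≤ q) (h : (n : ℝ) * q ≤ 1) :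
    (1 - q) ^ n ≤ 1 - (n : ℝ) * q / 2 := by
  rcases Nat.eq_zero_or_pos n with hn | hn
  · subst hn; simp
  have hn1 : (1 : ℝ) ≤ n := by exact_mod_cast hn
  have hq1 : q ≤ 1 := by nlinarith
  have hpos : (0 : ℝ) < 1 + q := by linarith
  have h1 : 1 - q ≤ (1 + q)⁻¹ := by
    rw [inv_eq_one_div, le_div_iff₀ hpos]; nlinarith
  have h2 : (1 - q) ^ n ≤ ((1 + q)⁻¹) ^ n := pow_le_pow_left₀ (by linarith) h1 n
  have hnq : 0 ≤ (n : ℝ) * q := by positivity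
  have hpos2 : (0 : ℝ) < 1 + (n : ℝ) * q := by linarith
  have h3 : (1 + (n : ℝ) * q) ≤ (1 + q) ^ n := one_add_mul_le_pow (by linarith) n
  have h4 : ((1 + q)⁻¹) ^ n ≤ (1 + (n : ℝ) * q)⁻¹ := by
    rw [inv_pow]
    exact inv_anti₀ hpos2 h3
  have h5 : (1 + (n : ℝ) * q)⁻¹ ≤ 1 - (n : ℝ) * q / 2 := by
    rw [inv_eq_one_div, div_le_iff₀ hpos2]
    nlinarith
  linarith

/-- Let `p ≤ n` be positive integers and `w` a real random variable with `E[w] = 0`,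
`E[w²] = 1`.  Let `W = (w_{ij})` be a `p × n` random matrix with i.i.d. entries distributed
as `w`, and let `Xᵢ` be the `i`-th row of `W`.  Then for every `K ≥ 1`,
`P(max_i |Xᵢ| ≥ √(Kn)) ≥ 1 − (1 − (n/2) P(w² ≥ nK))^p`. -/
theorem stmt_5 {Ω : Type*} [MeasureSpace Ω] [IsProbabilityMeasure (ℙ : Measure Ω)]
    (p n : ℕ) (hp : 0 < p) (hpn : p ≤ n)
    (w : Ω → ℝ) (hmean : ∫ ω, w ω = 0) (hvar : ∫ ω, (w ω) ^ 2 = 1)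
    (W : Fin p → Fin n → Ω → ℝ)
    (hindep : iIndepFun (fun ij : Fin p × Fin n => W ij.1 ij.2) ℙ)
    (hident : ∀ i j, IdentDistrib (W i j) w ℙ ℙ)
    (K : ℝ) (hK : 1 ≤ K) :
    ENNReal.ofReal
        (1 - (1 - (n : ℝ) / 2 * (ℙ {ω | (n : ℝ) * K ≤ (w ω) ^ 2}).toReal) ^ p)
      ≤ ℙ {ω | Real.sqrt (K * n) ≤ ⨆ i, Real.sqrt (∑ j, (W i j ω) ^ 2)} := by
  have hn : 0 < n := lt_of_lt_of_le hp hpn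
  have hnR : (0 : ℝ) < n := by exact_mod_cast hn
  have hK0 : (0 : ℝ) < K := lt_of_lt_of_le one_pos hK
  have hnK : (0 : ℝ) < (n : ℝ) * K := by positivity
  have hw : AEMeasurable w ℙ := (hident ⟨0, hp⟩ ⟨0, hn⟩).aemeasurable_snd
  -- integrability of w²
  have hint : Integrable (fun ω => w ω ^ 2) ℙ := by
    by_contra h
    rw [integral_undef h] at hvar
    exact one_ne_zero hvar.symm
  -- notation
  set s0 : Set ℝ := {x | (n : ℝ) * K ≤ x ^ 2} with hs0def
  have hs0 : MeasurableSet s0 := measurableSet_le measurable_const (measurable_id.pow_const 2)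
  have hws0 : {ω | (n : ℝ) * K ≤ (w ω) ^ 2} = w ⁻¹' s0 := rfl
  set qE : ENNReal := ℙ (w ⁻¹' s0) with hqEdef
  set q : ℝ := qE.toReal with hqdef
  have hqE_ne : qE ≠ ⊤ := measure_ne_top _ _
  have hq0 : 0 ≤ q := ENNReal.toReal_nonneg
  have hqE1 : qE ≤ 1 := prob_le_one
  have hq1 : q ≤ 1 := by
    have := ENNReal.toReal_mono ENNReal.one_ne_top hqE1
    simpa using this
  -- Chebyshev : n * q ≤ 1 / K
  have cheb : (n : ℝ) * q ≤ 1 / K := by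
    have hmeas : AEMeasurable (fun ω => ENNReal.ofReal (w ω ^ 2)) ℙ :=
      ENNReal.measurable_ofReal.comp_aemeasurable (hw.pow_const 2)
    have h1 := mul_meas_ge_le_lintegral₀ hmeas (ENNReal.ofReal ((n : ℝ) * K))
    have hseq : {ω | ENNReal.ofReal ((n : ℝ) * K) ≤ ENNReal.ofReal (w ω ^ 2)} = w ⁻¹' s0 := by
      ext ω
      simp only [Set.mem_setOf_eq, Set.mem_preimage, hs0def,
        ENNReal.ofReal_le_ofReal_iff (sq_nonneg (w ω))]
    have hlint : ∫⁻ ω, ENNReal.ofReal (w ω ^ 2) ∂ℙ = 1 := by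
      rw [← ofReal_integral_eq_lintegral_ofReal hint (Filter.Eventually.of_forall fun ω => sq_nonneg _),
        hvar, ENNReal.ofReal_one]
    rw [hseq, hlint] at h1
    have h2 : ((n : ℝ) * K) * q ≤ 1 := by
      have h3 : (ENNReal.ofReal ((n : ℝ) * K) * qE).toReal ≤ (1 : ℝ≥0∞).toReal :=
        ENNReal.toReal_mono ENNReal.one_ne_top h1
      rw [ENNReal.toReal_mul, ENNReal.toReal_ofReal hnK.le, ENNReal.toReal_one] at h3
      exact h3
    rw [le_div_iff₀ hK0]
    nlinarith
  have hnq1 : (n : ℝ) * q ≤ 1 := cheb.trans (by rw [div_le_one hK0]; exact hK)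
  -- the bad event
  set t0 : Set ℝ := {x | x ^ 2 < (n : ℝ) * K} with ht0def
  have ht0 : MeasurableSet t0 := measurableSet_lt (measurable_id.pow_const 2) measurable_const
  set A : Set Ω := ⋂ ij : Fin p × Fin n, W ij.1 ij.2 ⁻¹' t0 with hAdef
  have hprod : ℙ A = ∏ ij : Fin p × Fin n, ℙ (W ij.1 ij.2 ⁻¹' t0) :=
    hindep.meas_iInter (fun ij => ⟨t0, ht0, rfl⟩)
  have heach : ∀ (i : Fin p) (j : Fin n), ℙ (W i j ⁻¹' t0) = 1 - qE := by
    intro i j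
    rw [(hident i j).measure_mem_eq ht0]
    have hc : w ⁻¹' t0 = (w ⁻¹' s0)ᶜ := by
      ext ω; simp [ht0def, hs0def, not_le]
    rw [hc, measure_compl₀ (hw.nullMeasurable hs0) (measure_ne_top _ _), measure_univ]
  have hPA : ℙ A = (1 - qE) ^ (p * n) := by
    rw [hprod]
    simp only [heach]
    rw [Finset.prod_const, Finset.card_univ, Fintype.card_prod, Fintype.card_fin,
      Fintype.card_fin]
  -- Aᶜ is contained in the target event
  have hsub : Aᶜ ⊆ {ω | Real.sqrt (K * n) ≤ ⨆ i, Real.sqrt (∑ j, (W i j ω) ^ 2)} := by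
    intro ω hω
    simp only [hAdef, Set.mem_compl_iff, Set.mem_iInter, not_forall] at hω
    obtain ⟨⟨i, j⟩, hij⟩ := hω
    simp only [Set.mem_preimage, ht0def, Set.mem_setOf_eq, not_lt] at hij
    have h2 : (W i j ω) ^ 2 ≤ ∑ j', (W i j' ω) ^ 2 :=
      Finset.single_le_sum (fun j' _ => sq_nonneg (W i j' ω)) (Finset.mem_univ j)
    have h3 : Real.sqrt (K * n) ≤ Real.sqrt (∑ j', (W i j' ω) ^ 2) := by
      apply Real.sqrt_le_sqrt
      have : K * (n : ℝ) = (n : ℝ) * K := mul_comm _ _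
      linarith
    refine Set.mem_setOf_eq ▸ h3.trans (le_ciSup (f := fun i => Real.sqrt (∑ j, (W i j ω) ^ 2)) ?_ i)
    exact (Set.finite_range _).bddAbove
  -- A is null measurable
  have hAnm : NullMeasurableSet A ℙ := by
    refine NullMeasurableSet.iInter fun ij => ?_
    exact ((hident ij.1 ij.2).aemeasurable_fst.nullMeasurable) ht0
  have hcompl : ℙ Aᶜ = 1 - (1 - qE) ^ (p * n) := by
    rw [measure_compl₀ hAnm (measure_ne_top _ _), measure_univ, hPA]
  -- put things together
  have hmain : ENNReal.ofReal (1 - (1 - (n : ℝ) / 2 * q) ^ p) ≤ ℙ Aᶜ := by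
    rw [hcompl]
    have hqEeq : qE = ENNReal.ofReal q := (ENNReal.ofReal_toReal hqE_ne).symm
    have h1mq : (1 : ENNReal) - qE = ENNReal.ofReal (1 - q) := by
      rw [hqEeq, ← ENNReal.ofReal_one, ← ENNReal.ofReal_sub _ hq0]
    have hpow : ((1 : ENNReal) - qE) ^ (p * n) = ENNReal.ofReal ((1 - q) ^ (p * n)) := by
      rw [h1mq, ← ENNReal.ofReal_pow (by linarith)]
    have hple1 : (1 - q) ^ (p * n) ≤ 1 := pow_le_one₀ (by linarith) (by linarith)
    have hfin : (1 : ENNReal) - ENNReal.ofReal ((1 - q) ^ (p * n))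
        = ENNReal.ofReal (1 - (1 - q) ^ (p * n)) := by
      rw [← ENNReal.ofReal_one, ← ENNReal.ofReal_sub _ (pow_nonneg (by linarith) _)]
    rw [hpow, hfin]
    apply ENNReal.ofReal_le_ofReal
    have hkey : ((1 - q) ^ n) ^ p ≤ (1 - (n : ℝ) / 2 * q) ^ p := by
      apply pow_le_pow_left₀ (pow_nonneg (by linarith) n)
      have := aux_pow5 n q hq0 hnq1
      calc (1 - q) ^ n ≤ 1 - (n : ℝ) * q / 2 := this
        _ = 1 - (n : ℝ) / 2 * q := by ring
    have : (1 - q) ^ (p * n) = ((1 - q) ^ n) ^ p := by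
      rw [mul_comm, pow_mul]
    linarith [hkey, this ▸ hkey]
  calc ENNReal.ofReal (1 - (1 - (n : ℝ) / 2 * (ℙ {ω | (n : ℝ) * K ≤ (w ω) ^ 2}).toReal) ^ p)
      = ENNReal.ofReal (1 - (1 - (n : ℝ) / 2 * q) ^ p) := by rw [hws0]
    _ ≤ ℙ Aᶜ := hmain
    _ ≤ ℙ {ω | Real.sqrt (K * n) ≤ ⨆ i, Real.sqrt (∑ j, (W i j ω) ^ 2)} := measure_mono hsub
end

section
/- Let p ≤ n be positive integers, let α ≥ 2 and c₀ > 0, and let w be a real random variable with E[w] = 0, E[w²] = 1, satisfying P(|w| ≥ t) ≥ c₀/t^α for all t ≥ 1. Let W = (w_{ij}) be a p × n random matrix whose entries are i.i.d. copies of w, and let X_i ∈ ℝⁿ denote the i-th row of W. If K ≥ 1 and (n/2) P(w² ≥ Kn) ≤ 1/p, then P( max_{1 ≤ i ≤ p} |X_i| ≥ √(Kn) ) ≥ c₀ p / (4 n^{α/2 − 1} K^{α/2}). -/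
open MeasureTheory ProbabilityTheory
open scoped ENNReal

lemma aux_bernoulli (N : ℕ) (x : ℝ) (hx0 : 0 ≤ x) (hx1 : x ≤ 1) (hNx : (N : ℝ) * x ≤ 2) :
    (N : ℝ) * x / 4 ≤ 1 - (1 - x) ^ N := by
  set s := (1 - x) ^ N with hs
  have hs0 : 0 ≤ s := pow_nonneg (by linarith) N
  have h2 : 1 + (N : ℝ) * x ≤ (1 + x) ^ N := one_add_mul_le_pow (by linarith) N
  have h3 : s * (1 + x) ^ N ≤ 1 := by
    rw [hs, ← mul_pow]
    have : (1 - x) * (1 + x) = 1 - x ^ 2 := by ring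
    rw [this]
    exact pow_le_one₀ (by nlinarith) (by nlinarith)
  have h4 : (1 + (N : ℝ) * x) * s ≤ 1 :=
    le_trans (by nlinarith [mul_le_mul_of_nonneg_left h2 hs0]) h3
  have hNxs : 0 ≤ (N : ℝ) * x * s :=
    mul_nonneg (mul_nonneg (Nat.cast_nonneg N : (0:ℝ) ≤ N) hx0) hs0
  have hsle1 : s ≤ 1 := by nlinarith
  nlinarith [mul_nonneg (sub_nonneg.mpr hNx) (sub_nonneg.mpr hsle1)]

/-- Let `p ≤ n` be positive integers, `α ≥ 2`, `c₀ > 0`, and let `w` be a real random variable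
with `E[w] = 0`, `E[w²] = 1`, satisfying `P(|w| ≥ t) ≥ c₀ / t^α` for all `t ≥ 1`.  Let
`W = (w_{ij})` be a `p × n` random matrix with i.i.d. entries distributed as `w`, and let `Xᵢ`
be the `i`-th row of `W`.  If `K ≥ 1` and `(n/2) P(w² ≥ Kn) ≤ 1/p`, then
`P(max_i |Xᵢ| ≥ √(Kn)) ≥ c₀ p / (4 n^(α/2 − 1) K^(α/2))`. -/
theorem stmt_6 {Ω : Type*} [MeasureSpace Ω] [IsProbabilityMeasure (ℙ : Measure Ω)]
    (p n : ℕ) (hp : 0 < p) (hpn : p ≤ n)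
    (α c₀ : ℝ) (hα : 2 ≤ α) (hc₀ : 0 < c₀)
    (w : Ω → ℝ) (hmean : ∫ ω, w ω = 0) (hvar : ∫ ω, (w ω) ^ 2 = 1)
    (htail : ∀ t : ℝ, 1 ≤ t → ENNReal.ofReal (c₀ / t ^ α) ≤ ℙ {ω | t ≤ |w ω|})
    (W : Fin p → Fin n → Ω → ℝ)
    (hindep : iIndepFun (fun ij : Fin p × Fin n => W ij.1 ij.2) ℙ)
    (hident : ∀ i j, IdentDistrib (W i j) w ℙ ℙ)
    (K : ℝ) (hK : 1 ≤ K)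
    (hsmall : (n : ℝ) / 2 * (ℙ {ω | K * (n : ℝ) ≤ (w ω) ^ 2}).toReal ≤ 1 / (p : ℝ)) :
    ENNReal.ofReal (c₀ * p / (4 * (n : ℝ) ^ (α / 2 - 1) * K ^ (α / 2)))
      ≤ ℙ {ω | Real.sqrt (K * n) ≤ ⨆ i, Real.sqrt (∑ j, (W i j ω) ^ 2)} := by
  have hn : 0 < n := lt_of_lt_of_le hp hpn
  have hn1 : (1 : ℝ) ≤ n := Nat.one_le_cast.mpr hn
  have hKn0 : (0:ℝ) ≤ K * n := by positivity
  set t : ℝ := Real.sqrt (K * n) with ht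
  have ht1 : 1 ≤ t := by
    rw [ht, show (1:ℝ) = Real.sqrt 1 by simp]
    exact Real.sqrt_le_sqrt (by nlinarith)
  have ht0 : (0:ℝ) ≤ t := by linarith
  have htsq : t ^ 2 = K * n := Real.sq_sqrt hKn0
  -- the tail probability lower bound
  set q0 : ℝ := c₀ / t ^ α with hq0
  have hq0pos : 0 < q0 := div_pos hc₀ (Real.rpow_pos_of_pos (by linarith) α)
  have htq : ENNReal.ofReal q0 ≤ ℙ {ω | t ≤ |w ω|} := htail t ht1
  have hq0le1 : q0 ≤ 1 := by
    have := htq.trans prob_le_one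
    exact ENNReal.ofReal_le_one.mp this
  -- identify the two tail events
  have hset : {ω | K * (n : ℝ) ≤ (w ω) ^ 2} = {ω | t ≤ |w ω|} := by
    ext ω
    simp only [Set.mem_setOf_eq]
    constructor
    · intro h
      rw [ht]
      calc Real.sqrt (K * n) ≤ Real.sqrt ((w ω) ^ 2) := Real.sqrt_le_sqrt h
        _ = |w ω| := Real.sqrt_sq_eq_abs _
    · intro h
      nlinarith [abs_nonneg (w ω), sq_abs (w ω)]
  set qr : ℝ := (ℙ {ω | t ≤ |w ω|}).toReal with hqr
  have hq0qr : q0 ≤ qr :=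
    (ENNReal.ofReal_le_iff_le_toReal (measure_ne_top _ _)).mp htq
  have hNq : (p : ℝ) * n * qr ≤ 2 := by
    rw [hset] at hsmall
    have hp0 : (0:ℝ) < p := Nat.cast_pos.mpr hp
    have := mul_le_mul_of_nonneg_left hsmall (le_of_lt hp0)
    rw [mul_one_div, div_self (ne_of_gt hp0)] at this
    nlinarith
  -- the bad sets
  set A : Fin p × Fin n → Set Ω := fun ij => {ω | |W ij.1 ij.2 ω| < t} with hA
  have hsetR : {x : ℝ | |x| < t} = Set.Ioo (-t) t := by
    ext x; simp [abs_lt]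
  have hmeasR : MeasurableSet {x : ℝ | |x| < t} := by
    rw [hsetR]; exact measurableSet_Ioo
  -- product formula
  have hprod : ℙ (⋂ ij, A ij) = ∏ ij : Fin p × Fin n, ℙ (A ij) := by
    have := hindep.measure_inter_preimage_eq_mul Finset.univ
      (sets := fun _ => {x : ℝ | |x| < t}) (fun i _ => hmeasR)
    simpa using this
  -- each factor
  have hfactor : ∀ ij : Fin p × Fin n, ℙ (A ij) ≤ 1 - ENNReal.ofReal q0 := by
    intro ij
    have hae : AEMeasurable (W ij.1 ij.2) ℙ := (hident ij.1 ij.2).aemeasurable_fst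
    have hmeasR' : MeasurableSet {x : ℝ | t ≤ |x|} := by
      have : {x : ℝ | t ≤ |x|} = {x : ℝ | |x| < t}ᶜ := by
        ext x; simp [not_lt]
      rw [this]; exact hmeasR.compl
    have hnm : NullMeasurableSet {ω | t ≤ |W ij.1 ij.2 ω|} ℙ :=
      hae.nullMeasurable hmeasR'
    have hcompl : A ij = {ω | t ≤ |W ij.1 ij.2 ω|}ᶜ := by
      ext ω; simp [hA, not_le]
    have hWq : ENNReal.ofReal q0 ≤ ℙ {ω | t ≤ |W ij.1 ij.2 ω|} := by
      have heq : ℙ {ω | t ≤ |W ij.1 ij.2 ω|} = ℙ {ω | t ≤ |w ω|} :=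
        (hident ij.1 ij.2).measure_mem_eq hmeasR'
      rw [heq]; exact htq
    rw [hcompl, prob_compl_eq_one_sub₀ hnm]
    exact tsub_le_tsub_left hWq 1
  have hprodle : ℙ (⋂ ij, A ij) ≤ (1 - ENNReal.ofReal q0) ^ (p * n) := by
    rw [hprod]
    calc ∏ ij : Fin p × Fin n, ℙ (A ij)
        ≤ ∏ _ij : Fin p × Fin n, (1 - ENNReal.ofReal q0) :=
          Finset.prod_le_prod' (fun ij _ => hfactor ij)
      _ = (1 - ENNReal.ofReal q0) ^ (p * n) := by
          rw [Finset.prod_const]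
          simp [Finset.card_univ]
  -- inclusion into the goal event
  have hsub : (⋂ ij, A ij)ᶜ ⊆ {ω | t ≤ ⨆ i, Real.sqrt (∑ j, (W i j ω) ^ 2)} := by
    intro ω hω
    simp only [Set.mem_compl_iff, Set.mem_iInter, not_forall] at hω
    obtain ⟨ij, hij⟩ := hω
    have h1 : t ≤ |W ij.1 ij.2 ω| := by
      by_contra h
      exact hij (by simpa [hA] using not_le.mp h)
    have hterm : t ≤ Real.sqrt (∑ j, (W ij.1 j ω) ^ 2) := by
      rw [show t = Real.sqrt (t ^ 2) from (Real.sqrt_sq ht0).symm]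
      apply Real.sqrt_le_sqrt
      calc t ^ 2 ≤ (W ij.1 ij.2 ω) ^ 2 := by nlinarith [sq_abs (W ij.1 ij.2 ω)]
        _ ≤ ∑ j, (W ij.1 j ω) ^ 2 :=
          Finset.single_le_sum (f := fun j : Fin n => (W ij.1 j ω) ^ 2)
            (fun _ _ => sq_nonneg _) (Finset.mem_univ _)
    have : Nonempty (Fin p) := ⟨⟨0, hp⟩⟩
    exact le_trans hterm
      (le_ciSup (f := fun i : Fin p => Real.sqrt (∑ j, (W i j ω) ^ 2))
        ((Set.finite_range _).bddAbove) ij.1)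
  -- put it together
  have hmain : 1 - (1 - ENNReal.ofReal q0) ^ (p * n)
      ≤ ℙ {ω | t ≤ ⨆ i, Real.sqrt (∑ j, (W i j ω) ^ 2)} := by
    have h1 : (1 : ℝ≥0∞) ≤ ℙ (⋂ ij, A ij) + ℙ ((⋂ ij, A ij)ᶜ) := by
      calc (1 : ℝ≥0∞) = ℙ ((⋂ ij, A ij) ∪ (⋂ ij, A ij)ᶜ) := by
            rw [Set.union_compl_self]; exact measure_univ.symm
        _ ≤ ℙ (⋂ ij, A ij) + ℙ ((⋂ ij, A ij)ᶜ) := measure_union_le _ _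
    have h2 : 1 - ℙ (⋂ ij, A ij) ≤ ℙ ((⋂ ij, A ij)ᶜ) :=
      tsub_le_iff_right.mpr (by rw [add_comm]; exact h1)
    calc 1 - (1 - ENNReal.ofReal q0) ^ (p * n) ≤ 1 - ℙ (⋂ ij, A ij) :=
          tsub_le_tsub_left hprodle 1
      _ ≤ ℙ ((⋂ ij, A ij)ᶜ) := h2
      _ ≤ _ := measure_mono hsub
  refine le_trans ?_ hmain
  -- pure computation in ENNReal / ℝ
  have e1 : (1 : ℝ≥0∞) - ENNReal.ofReal q0 = ENNReal.ofReal (1 - q0) := by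
    rw [ENNReal.ofReal_sub 1 (le_of_lt hq0pos), ENNReal.ofReal_one]
  have e2 : (1 : ℝ≥0∞) - (1 - ENNReal.ofReal q0) ^ (p * n)
      = ENNReal.ofReal (1 - (1 - q0) ^ (p * n)) := by
    rw [e1, ← ENNReal.ofReal_pow (by linarith), ENNReal.ofReal_sub 1 (pow_nonneg (by linarith) _),
      ENNReal.ofReal_one]
  rw [e2]
  apply ENNReal.ofReal_le_ofReal
  -- the target equals (p*n)*q0/4
  have hA0 : (0:ℝ) < (n : ℝ) ^ (α / 2 - 1) := Real.rpow_pos_of_pos (by positivity) _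
  have hB0 : (0:ℝ) < K ^ (α / 2) := Real.rpow_pos_of_pos (by linarith) _
  have htα : t ^ α = K ^ (α / 2) * ((n : ℝ) ^ (α / 2 - 1) * n) := by
    have h1 : t ^ α = (K * n) ^ (α / 2) := by
      rw [ht, Real.sqrt_eq_rpow, ← Real.rpow_mul hKn0]
      ring_nf
    have h2 : (n : ℝ) ^ (α / 2 - 1) * (n : ℝ) = (n : ℝ) ^ (α / 2) := by
      rw [Real.rpow_sub (by positivity), Real.rpow_one]
      field_simp
    rw [h1, Real.mul_rpow (by linarith) (by positivity), h2]
  have hNq0 : ((p * n : ℕ) : ℝ) * q0 ≤ 2 := by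
    push_cast
    have hpn0 : (0:ℝ) ≤ (p : ℝ) * n := by positivity
    nlinarith [mul_le_mul_of_nonneg_left hq0qr hpn0]
  have heq : c₀ * p / (4 * (n : ℝ) ^ (α / 2 - 1) * K ^ (α / 2))
      = ((p * n : ℕ) : ℝ) * q0 / 4 := by
    rw [hq0, htα]
    push_cast
    field_simp
  rw [heq]
  exact aux_bernoulli (p * n) q0 hq0pos.le hq0le1 hNq0
end

section
/- Let p ≤ n be positive integers and let w be a real random variable with E[w] = 0 and E[w²] = 1. Let W = (w_{ij}) be a p × n random matrix whose entries are i.i.d. copies of w, and let X_i ∈ ℝⁿ denote the i-th row of W. If K ≥ 1 and (n/2) P(w² ≥ Kn) ≥ 1/p, then P( max_{1 ≤ i ≤ p} |X_i| ≥ √(Kn) ) ≥ 1/2. -/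
open MeasureTheory ProbabilityTheory

lemma stmt_7_aux (r : ℝ) (h0 : 0 ≤ r) (h1 : r ≤ 1) (m : ℕ) (hm : 2 ≤ (m : ℝ) * r) :
    (1 - r) ^ m ≤ 1 / 2 := by
  have h2 : (1 - r) ≤ Real.exp (-r) := by linarith [Real.add_one_le_exp (-r)]
  have h3 : (1 - r) ^ m ≤ (Real.exp (-r)) ^ m := pow_le_pow_left₀ (by linarith) h2 m
  rw [← Real.exp_nat_mul] at h3
  have h4 : Real.exp ((m : ℝ) * -r) ≤ Real.exp (-2) :=
    Real.exp_le_exp.mpr (by nlinarith)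
  have hE : Real.exp (-2) ≤ 1 / 2 := by
    rw [Real.exp_neg]
    have h5 : (2 : ℝ) ≤ Real.exp 2 := by linarith [Real.add_one_le_exp (2 : ℝ)]
    have : (Real.exp 2)⁻¹ ≤ (2 : ℝ)⁻¹ := inv_anti₀ (by norm_num) h5
    linarith
  linarith

/-- Let `p ≤ n` be positive integers and `w` a real random variable with `E[w] = 0`,
`E[w²] = 1`.  Let `W = (w_{ij})` be a `p × n` random matrix with i.i.d. entries distributed
as `w`, and let `Xᵢ` be the `i`-th row of `W`.  If `K ≥ 1` and `(n/2) P(w² ≥ Kn) ≥ 1/p`, then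
`P(max_i |Xᵢ| ≥ √(Kn)) ≥ 1/2`. -/
theorem stmt_7 {Ω : Type*} [MeasureSpace Ω] [IsProbabilityMeasure (ℙ : Measure Ω)]
    (p n : ℕ) (hp : 0 < p) (hpn : p ≤ n)
    (w : Ω → ℝ) (hmean : ∫ ω, w ω = 0) (hvar : ∫ ω, (w ω) ^ 2 = 1)
    (W : Fin p → Fin n → Ω → ℝ)
    (hindep : iIndepFun (fun ij : Fin p × Fin n => W ij.1 ij.2) ℙ)
    (hident : ∀ i j, IdentDistrib (W i j) w ℙ ℙ)
    (K : ℝ) (hK : 1 ≤ K)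
    (hbig : 1 / (p : ℝ) ≤ (n : ℝ) / 2 * (ℙ {ω | K * (n : ℝ) ≤ (w ω) ^ 2}).toReal) :
    (1 : ENNReal) / 2 ≤ ℙ {ω | Real.sqrt (K * n) ≤ ⨆ i, Real.sqrt (∑ j, (W i j ω) ^ 2)} := by
  classical
  have hn : 0 < n := lt_of_lt_of_le hp hpn
  haveI : Nonempty (Fin p) := ⟨⟨0, hp⟩⟩
  haveI : Nonempty (Fin n) := ⟨⟨0, hn⟩⟩
  set s : Set ℝ := {x | K * n ≤ x ^ 2} with hs_def
  have hs : MeasurableSet s :=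
    measurableSet_le measurable_const (by measurability)
  have hw_aem : AEMeasurable w ℙ :=
    (hident (Classical.arbitrary _) (Classical.arbitrary _)).aemeasurable_snd
  set μ := Measure.map w ℙ with hμ
  haveI hμprob : IsProbabilityMeasure μ := Measure.isProbabilityMeasure_map hw_aem
  set q := μ s with hq_def
  have hq1 : q ≤ 1 := prob_le_one
  have hqS : ℙ {ω | K * n ≤ w ω ^ 2} = q := by
    rw [hq_def, hμ, Measure.map_apply_of_aemeasurable hw_aem hs]
    rfl
  -- probability of each complement entry event
  have hcompl : ∀ ij : Fin p × Fin n, ℙ (W ij.1 ij.2 ⁻¹' sᶜ) = 1 - q := by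
    intro ij
    have h1 := (hident ij.1 ij.2).measure_mem_eq hs.compl
    have h2 : ℙ (w ⁻¹' sᶜ) = μ sᶜ := by
      rw [hμ, Measure.map_apply_of_aemeasurable hw_aem hs.compl]
    rw [h1, h2, prob_compl_eq_one_sub hs]
  -- intersection via independence
  have hinter : ℙ (⋂ ij : Fin p × Fin n, W ij.1 ij.2 ⁻¹' sᶜ) = (1 - q) ^ (p * n) := by
    have h := (iIndepFun_iff_measure_inter_preimage_eq_mul.mp hindep)
      Finset.univ (sets := fun _ => sᶜ) (fun _ _ => hs.compl)
    simp only [Finset.mem_univ, Set.iInter_true] at h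
    rw [h]
    rw [Finset.prod_congr rfl (fun ij _ => hcompl ij), Finset.prod_const]
    simp [Fintype.card_prod]
  -- union is contained in the target event
  set T : Set Ω := {ω | Real.sqrt (K * n) ≤ ⨆ i, Real.sqrt (∑ j, (W i j ω) ^ 2)} with hT
  have hsub : (⋃ ij : Fin p × Fin n, W ij.1 ij.2 ⁻¹' s) ⊆ T := by
    rintro ω hω
    obtain ⟨ij, hij⟩ := Set.mem_iUnion.mp hω
    have hij' : K * n ≤ (W ij.1 ij.2 ω) ^ 2 := hij
    have hsum : K * n ≤ ∑ j, (W ij.1 j ω) ^ 2 := by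
      calc K * n ≤ (W ij.1 ij.2 ω) ^ 2 := hij'
        _ ≤ ∑ j, (W ij.1 j ω) ^ 2 :=
          Finset.single_le_sum (f := fun j => (W ij.1 j ω) ^ 2)
            (fun j _ => sq_nonneg _) (Finset.mem_univ ij.2)
    have h1 : Real.sqrt (K * n) ≤ Real.sqrt (∑ j, (W ij.1 j ω) ^ 2) :=
      Real.sqrt_le_sqrt hsum
    have h2 : Real.sqrt (∑ j, (W ij.1 j ω) ^ 2)
        ≤ ⨆ i, Real.sqrt (∑ j, (W i j ω) ^ 2) :=
      le_ciSup (f := fun i => Real.sqrt (∑ j, (W i j ω) ^ 2))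
        (Set.Finite.bddAbove (Set.finite_range _)) ij.1
    exact le_trans h1 h2
  have hTc : Tᶜ ⊆ ⋂ ij : Fin p × Fin n, W ij.1 ij.2 ⁻¹' sᶜ := by
    rw [show (⋂ ij : Fin p × Fin n, W ij.1 ij.2 ⁻¹' sᶜ)
        = (⋃ ij : Fin p × Fin n, W ij.1 ij.2 ⁻¹' s)ᶜ by
      simp [Set.compl_iUnion]]
    exact Set.compl_subset_compl.mpr hsub
  -- real-number bound
  set r : ℝ := q.toReal with hr
  have hq_ne_top : q ≠ ⊤ := (lt_of_le_of_lt hq1 ENNReal.one_lt_top).ne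
  have hr0 : 0 ≤ r := ENNReal.toReal_nonneg
  have hr1 : r ≤ 1 := by
    rw [hr]
    exact ENNReal.toReal_le_of_le_ofReal (by norm_num) (by simpa using hq1)
  have hmr : 2 ≤ ((p * n : ℕ) : ℝ) * r := by
    rw [hqS] at hbig
    have hp' : (0 : ℝ) < p := by exact_mod_cast hp
    push_cast
    rw [div_le_iff₀ hp'] at hbig
    nlinarith
  have hreal : (1 - r) ^ (p * n) ≤ 1 / 2 := stmt_7_aux r hr0 hr1 (p * n) hmr
  have hpow : (1 - q) ^ (p * n) ≤ 1 / 2 := by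
    have hq_eq : q = ENNReal.ofReal r := (ENNReal.ofReal_toReal hq_ne_top).symm
    have h1q : (1 : ENNReal) - q = ENNReal.ofReal (1 - r) := by
      rw [hq_eq, ← ENNReal.ofReal_one, ← ENNReal.ofReal_sub _ hr0]
    rw [h1q, ← ENNReal.ofReal_pow (by linarith)]
    calc ENNReal.ofReal ((1 - r) ^ (p * n)) ≤ ENNReal.ofReal (1 / 2) :=
          ENNReal.ofReal_le_ofReal hreal
      _ = 1 / 2 := by
          rw [ENNReal.ofReal_div_of_pos (by norm_num)]
          norm_num
  have hTcle : ℙ Tᶜ ≤ 1 / 2 := le_trans (le_trans (measure_mono hTc) hinter.le) hpow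
  have hunion : (1 : ENNReal) ≤ ℙ T + ℙ Tᶜ := by
    have := measure_union_le (μ := ℙ) T Tᶜ
    simpa using this
  have hle : (1 : ENNReal) ≤ ℙ T + 1 / 2 := le_trans hunion (by gcongr)
  have h2 : (1 : ENNReal) - 1 / 2 ≤ ℙ T := tsub_le_iff_right.mpr hle
  rwa [ENNReal.sub_half ENNReal.one_ne_top] at h2
end
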